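/- Let (X,σ) be a Deaconu-Renault system on a metric space (X,d), K ⊆ X compact, n ∈ ℕ, and ε > 0. Then: (1) ssep(n,ε,σ,K) = sep(n,ε,σ,K ∩ Dom(σ^{n−1})); (2) span(n,ε,σ,K ∩ Dom(σ^{n−1})) ≤ sspan(n,ε/2,σ,K). -/

import Mathlib

open Set Filter Topology
open scoped ENNReal NNReal

/-- A Deaconu-Renault system: a local homeomorphism `σ` from an open subset `dom` of `X`
onto an open subset of `X`. (The underlying space is assumed locally compact Hausdorff in
the theorems.) -/
structure DRSystem (X : Type*) [TopologicalSpace X] where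
  toFun : X → X
  dom : Set X
  isOpen_dom : IsOpen dom
  isOpen_image : IsOpen (toFun '' dom)
  isLocalHomeomorphOn : IsLocalHomeomorphOn toFun dom

namespace DRSystem

variable {X Y : Type*} [TopologicalSpace X] [TopologicalSpace Y]

/-- `Dom(σⁿ)`, defined inductively by `Dom(σ⁰) = X` and `Dom(σⁿ⁺¹) = σ⁻¹(Dom(σⁿ))`
(preimage of the partial map `σ`). -/
def domN (S : DRSystem X) : ℕ → Set X
  | 0 => Set.univ
  | n + 1 => S.dom ∩ S.toFun ⁻¹' S.domN n

/-- `I_n(x) = {i ∈ {0,…,n−1} : x ∈ Dom(σ^i)}`. -/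
def IN (S : DRSystem X) (n : ℕ) (x : X) : Set ℕ :=
  {i : ℕ | i < n ∧ x ∈ S.domN i}

/-- `d_n(x,y) = max_{i ∈ I_n(x) ∩ I_n(y)} ρ(σ^i x, σ^i y)`, for a metric `ρ`. -/
noncomputable def dN (S : DRSystem X) (ρ : X → X → ℝ) (n : ℕ) (x y : X) : ℝ :=
  sSup ((fun i => ρ (S.toFun^[i] x) (S.toFun^[i] y)) '' (S.IN n x ∩ S.IN n y))

/-- `A` is an `(n,ε,σ,Z)`-separated set. -/
def IsSep (S : DRSystem X) (ρ : X → X → ℝ) (n : ℕ) (ε : ℝ) (Z A : Set X) : Prop :=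
  A ⊆ Z ∧ A.Pairwise fun x y => ε < S.dN ρ n x y

/-- `B` is an `(n,ε,σ,Z)`-spanning set. -/
def IsSpan (S : DRSystem X) (ρ : X → X → ℝ) (n : ℕ) (ε : ℝ) (Z B : Set X) : Prop :=
  B ⊆ Z ∧ ∀ x ∈ Z, ∃ y ∈ B, S.dN ρ n x y ≤ ε

/-- `sep(n,ε,σ,Z)`: the largest cardinality of an `(n,ε,σ,Z)`-separated set. -/
noncomputable def sep (S : DRSystem X) (ρ : X → X → ℝ) (n : ℕ) (ε : ℝ) (Z : Set X) : ℕ∞ :=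
  ⨆ (A : Set X) (_ : S.IsSep ρ n ε Z A), A.encard

/-- `span(n,ε,σ,Z)`: the smallest cardinality of an `(n,ε,σ,Z)`-spanning set. -/
noncomputable def span (S : DRSystem X) (ρ : X → X → ℝ) (n : ℕ) (ε : ℝ) (Z : Set X) : ℕ∞ :=
  ⨅ (B : Set X) (_ : S.IsSpan ρ n ε Z B), B.encard

/-- `ssep(n,ε,σ,K) = sup_F sep(n,ε,σ,K∩F)`, over closed `F ⊆ Dom(σ^{n-1})`. -/
noncomputable def ssep (S : DRSystem X) (ρ : X → X → ℝ) (n : ℕ) (ε : ℝ) (K : Set X) : ℕ∞ :=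
  ⨆ (F : Set X) (_ : IsClosed F ∧ F ⊆ S.domN (n - 1)), S.sep ρ n ε (K ∩ F)

/-- `sspan(n,ε,σ,K) = sup_F span(n,ε,σ,K∩F)`, over closed `F ⊆ Dom(σ^{n-1})`. -/
noncomputable def sspan (S : DRSystem X) (ρ : X → X → ℝ) (n : ℕ) (ε : ℝ) (K : Set X) : ℕ∞ :=
  ⨆ (F : Set X) (_ : IsClosed F ∧ F ⊆ S.domN (n - 1)), S.span ρ n ε (K ∩ F)

/-- The metric entropy `h_ρ(σ) = sup_K lim_{ε→0} limsup_n (1/n) log ssep(n,ε,σ,K)`.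
Since `ssep` (hence the inner quantity) is monotone nonincreasing in `ε`, the limit as
`ε → 0⁺` equals the supremum over `ε > 0`. -/
noncomputable def hMet (S : DRSystem X) (ρ : X → X → ℝ) : EReal :=
  ⨆ (K : Set X) (_ : IsCompact K), ⨆ (ε : ℝ) (_ : (0 : ℝ) < ε),
    Filter.atTop.limsup fun n : ℕ =>
      ((n : ℝ)⁻¹ : EReal) * ENNReal.log ((S.ssep ρ n ε K : ℕ∞) : ℝ≥0∞)

/-- A conjugacy between Deaconu-Renault systems: a homeomorphism intertwining the
partial maps on their domains, in both directions. -/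
def IsConjugacy (S : DRSystem X) (T : DRSystem Y) (φ : X ≃ₜ Y) : Prop :=
  (∀ x ∈ S.dom, T.toFun (φ x) = φ (S.toFun x)) ∧
  (∀ y ∈ T.dom, S.toFun (φ.symm y) = φ.symm (T.toFun y))

/-- A factor map between Deaconu-Renault systems: continuous, compact covering, surjective,
with `φ(Dom σ_X) ⊆ Dom σ_Y`, `σ_Y ∘ φ = φ ∘ σ_X` on `Dom σ_X`, and `φ⁻¹(Dom σ_Y) ⊆ Dom σ_X`. -/
def IsFactorMap (S : DRSystem X) (T : DRSystem Y) (φ : X → Y) : Prop :=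
  Continuous φ ∧
  (∀ K : Set Y, IsCompact K → ∃ C : Set X, IsCompact C ∧ φ '' C = K) ∧
  Function.Surjective φ ∧
  φ '' S.dom ⊆ T.dom ∧
  (∀ x ∈ S.dom, T.toFun (φ x) = φ (S.toFun x)) ∧
  φ ⁻¹' T.dom ⊆ S.dom

/-- `α` is an open cover of `K`. -/
def IsOpenCover (α : Set (Set X)) (K : Set X) : Prop :=
  (∀ A ∈ α, IsOpen A) ∧ K ⊆ ⋃₀ α

/-- `σ^{-i}(A)`: the preimage of `A` under the partial map `σ^i`. -/
def preN (S : DRSystem X) (i : ℕ) (A : Set X) : Set X :=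
  S.domN i ∩ S.toFun^[i] ⁻¹' A

/-- The join `α ∨ β` of two covers. -/
def covJoin (α β : Set (Set X)) : Set (Set X) :=
  Set.image2 (· ∩ ·) α β

/-- `α_n = α ∨ σ^{-1}(α) ∨ … ∨ σ^{-n}(α)`. -/
def covIter (S : DRSystem X) (α : Set (Set X)) (n : ℕ) : Set (Set X) :=
  {B | ∃ f : ℕ → Set X, (∀ i ≤ n, f i ∈ α) ∧ B = ⋂ i ∈ Finset.range (n + 1), S.preN i (f i)}

/-- `Y_n = Y ∩ σ^{-1}(Y) ∩ … ∩ σ^{-n}(Y)`. -/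
def setIter (S : DRSystem X) (Z : Set X) (n : ℕ) : Set X :=
  ⋂ i ∈ Finset.range (n + 1), S.preN i Z

/-- `N(α,Z)`: the smallest cardinality of a subcover of `α` covering `Z`. -/
noncomputable def Ncov (α : Set (Set X)) (Z : Set X) : ℕ∞ :=
  ⨅ (β : Set (Set X)) (_ : β ⊆ α ∧ Z ⊆ ⋃₀ β), β.encard

/-- `H(α,Z) = log N(α,Z)` (with `N = 1` when `Z = ∅`, following the paper's convention). -/
noncomputable def Hcov (α : Set (Set X)) (Z : Set X) : EReal :=
  ENNReal.log ((max 1 (Ncov α Z) : ℕ∞) : ℝ≥0∞)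

/-- `h(α,σ,K) = lim_n (1/n) H(α_n,K_n)` (expressed as a `limsup`; the limit exists). -/
noncomputable def hCov (S : DRSystem X) (α : Set (Set X)) (K : Set X) : EReal :=
  Filter.atTop.limsup fun n : ℕ =>
    ((n : ℝ)⁻¹ : EReal) * Hcov (S.covIter α n) (S.setIter K n)

/-- `h(σ,K) = sup_α h(α,σ,K)` over all open covers `α` of `K`. -/
noncomputable def hTopAt (S : DRSystem X) (K : Set X) : EReal :=
  ⨆ (α : Set (Set X)) (_ : IsOpenCover α K), S.hCov α K

/-- The topological entropy `h(σ) = sup_K h(σ,K)` over all compact `K ⊆ X`. -/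
noncomputable def hTop (S : DRSystem X) : EReal :=
  ⨆ (K : Set X) (_ : IsCompact K), S.hTopAt K

end DRSystem

namespace DRSystem

variable {X : Type*} [MetricSpace X]

lemma domN_succ_subset (S : DRSystem X) : ∀ m, S.domN (m + 1) ⊆ S.domN m
  | 0 => fun x _ => trivial
  | m + 1 => fun x hx => ⟨hx.1, S.domN_succ_subset m hx.2⟩

lemma domN_anti (S : DRSystem X) {k m : ℕ} (h : k ≤ m) : S.domN m ⊆ S.domN k := by
  induction h with
  | refl => exact subset_rfl
  | step h ih => exact (S.domN_succ_subset _).trans ih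

lemma mem_IN_of_lt (S : DRSystem X) {n i : ℕ} {x : X} (hx : x ∈ S.domN (n - 1))
    (hi : i < n) : i ∈ S.IN n x :=
  ⟨hi, S.domN_anti (Nat.le_pred_of_lt hi) hx⟩

lemma dN_bdd (S : DRSystem X) (n : ℕ) (x y : X) :
    BddAbove ((fun i => dist (S.toFun^[i] x) (S.toFun^[i] y)) '' (S.IN n x ∩ S.IN n y)) :=
  (((Set.finite_Iio n).subset (fun i hi => hi.1.1)).image _).bddAbove

lemma dist_le_dN (S : DRSystem X) {n : ℕ} (hn : 1 ≤ n) (x y : X) :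
    dist x y ≤ S.dN dist n x y := by
  have h0 : (0 : ℕ) ∈ S.IN n x ∩ S.IN n y :=
    ⟨⟨hn, Set.mem_univ x⟩, ⟨hn, Set.mem_univ y⟩⟩
  have := le_csSup (S.dN_bdd n x y) (Set.mem_image_of_mem _ h0)
  simpa [DRSystem.dN] using this

lemma dN_nonneg (S : DRSystem X) {n : ℕ} (hn : 1 ≤ n) (x y : X) :
    0 ≤ S.dN dist n x y :=
  dist_nonneg.trans (S.dist_le_dN hn x y)

lemma dN_self_le (S : DRSystem X) {n : ℕ} {ε : ℝ} (hε : 0 ≤ ε) (x : X) :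
    S.dN dist n x x ≤ ε := by
  refine Real.sSup_le ?_ hε
  rintro r ⟨i, -, rfl⟩
  simpa using hε

lemma dN_symm (S : DRSystem X) (n : ℕ) (x y : X) :
    S.dN dist n x y = S.dN dist n y x := by
  unfold DRSystem.dN
  rw [Set.inter_comm]
  exact congrArg sSup (Set.image_congr fun i _ => dist_comm _ _)

lemma le_dN (S : DRSystem X) {n : ℕ} {x y : X} (hx : x ∈ S.domN (n - 1))
    (hy : y ∈ S.domN (n - 1)) {i : ℕ} (hi : i < n) :
    dist (S.toFun^[i] x) (S.toFun^[i] y) ≤ S.dN dist n x y :=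
  le_csSup (S.dN_bdd n x y)
    (Set.mem_image_of_mem _ ⟨S.mem_IN_of_lt hx hi, S.mem_IN_of_lt hy hi⟩)

lemma dN_triangle (S : DRSystem X) {n : ℕ} (hn : 1 ≤ n) {x y z : X}
    (hx : x ∈ S.domN (n - 1)) (hy : y ∈ S.domN (n - 1)) (hz : z ∈ S.domN (n - 1)) :
    S.dN dist n x y ≤ S.dN dist n x z + S.dN dist n z y := by
  refine Real.sSup_le ?_ (add_nonneg (S.dN_nonneg hn x z) (S.dN_nonneg hn z y))
  rintro r ⟨i, hi, rfl⟩
  have hin : i < n := hi.1.1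
  exact (dist_triangle _ (S.toFun^[i] z) _).trans
    (add_le_add (S.le_dN hx hz hin) (S.le_dN hz hy hin))

/-- Core counting estimate: an `(n,ε)`-separated set injects into any
`(n,ε/2)`-spanning set, provided everything lives in `domN (n-1)`. -/
lemma sep_encard_le_span_encard (S : DRSystem X) {n : ℕ} (hn : 1 ≤ n) {ε : ℝ}
    {Z' A B : Set X} (hZ' : Z' ⊆ S.domN (n - 1)) (hA : A ⊆ Z')
    (hAp : A.Pairwise fun x y => ε < S.dN dist n x y)
    (hB : S.IsSpan dist n (ε / 2) Z' B) : A.encard ≤ B.encard := by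
  classical
  choose! f hf1 hf2 using fun x (hx : x ∈ Z') => hB.2 x hx
  refine Set.encard_le_encard_of_injOn (f := f) (fun x hx => hf1 x (hA hx)) ?_
  intro x hx y hy hxy
  by_contra hne
  have h1 : S.dN dist n x (f x) ≤ ε / 2 := hf2 x (hA hx)
  have h2 : S.dN dist n y (f y) ≤ ε / 2 := hf2 y (hA hy)
  have hfx : f x ∈ Z' := hB.1 (hf1 x (hA hx))
  have htri := S.dN_triangle hn (hZ' (hA hx)) (hZ' (hA hy)) (hZ' hfx)
  have hs : S.dN dist n (f x) y = S.dN dist n y (f y) := by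
    rw [hxy, S.dN_symm]
  have hsep : ε < S.dN dist n x y := hAp hx hy hne
  linarith

lemma enat_top_le {x : ℕ∞} (h : ∀ m : ℕ, (m : ℕ∞) ≤ x) : (⊤ : ℕ∞) ≤ x := by
  cases x with
  | top => exact le_rfl
  | coe k =>
    have := h (k + 1)
    simp only [Nat.cast_le] at this
    omega

end DRSystem

/-- (1) `ssep(n,ε,σ,K) = sep(n,ε,σ,K ∩ Dom(σ^{n-1}))`;
(2) `span(n,ε,σ,K ∩ Dom(σ^{n-1})) ≤ sspan(n,ε/2,σ,K)`. -/
theorem statement4 {X : Type*} [MetricSpace X] [LocallyCompactSpace X]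
    (S : DRSystem X) (K : Set X) (hK : IsCompact K) (n : ℕ) (hn : 1 ≤ n)
    (ε : ℝ) (hε : 0 < ε) :
    S.ssep dist n ε K = S.sep dist n ε (K ∩ S.domN (n - 1)) ∧
      S.span dist n ε (K ∩ S.domN (n - 1)) ≤ S.sspan dist n (ε / 2) K := by
  classical
  set Z : Set X := K ∩ S.domN (n - 1) with hZdef
  have hZdom : Z ⊆ S.domN (n - 1) := Set.inter_subset_right
  have hZK : Z ⊆ K := Set.inter_subset_left
  -- reduce lower bounds over separated sets to the finite case
  have main : ∀ (T : ℕ∞),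
      (∀ A' : Set X, A' ⊆ Z → (A'.Pairwise fun x y => ε < S.dN dist n x y) →
        A'.Finite → A'.encard ≤ T) →
      ∀ A : Set X, S.IsSep dist n ε Z A → A.encard ≤ T := by
    intro T hfin A hA
    rcases A.finite_or_infinite with hAf | hAi
    · exact hfin A hA.1 hA.2 hAf
    · rw [hAi.encard_eq]
      refine DRSystem.enat_top_le fun m => ?_
      obtain ⟨t, htA, htfin, htcard⟩ := hAi.exists_subset_ncard_eq m
      calc (m : ℕ∞) = t.encard := by rw [← htcard, htfin.cast_ncard_eq]
        _ ≤ T := hfin t (htA.trans hA.1) (hA.2.mono htA) htfin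
  -- finite separated sets bound ssep from below
  have hsep_fin : ∀ A' : Set X, A' ⊆ Z →
      (A'.Pairwise fun x y => ε < S.dN dist n x y) → A'.Finite →
      A'.encard ≤ S.ssep dist n ε K := by
    intro A' hAZ hAp hAf
    have hAD : A' ⊆ S.domN (n - 1) := hAZ.trans hZdom
    have hAK : A' ⊆ K := hAZ.trans hZK
    calc A'.encard ≤ S.sep dist n ε (K ∩ A') := by
          simp only [DRSystem.sep]
          exact le_iSup₂_of_le A' ⟨fun x hx => ⟨hAK hx, hx⟩, hAp⟩ le_rfl
      _ ≤ S.ssep dist n ε K := by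
          simp only [DRSystem.ssep]
          exact le_iSup₂_of_le A' ⟨hAf.isClosed, hAD⟩ le_rfl
  -- finite separated sets bound sspan(ε/2) from below
  have hspan_fin : ∀ A' : Set X, A' ⊆ Z →
      (A'.Pairwise fun x y => ε < S.dN dist n x y) → A'.Finite →
      A'.encard ≤ S.sspan dist n (ε / 2) K := by
    intro A' hAZ hAp hAf
    have hAD : A' ⊆ S.domN (n - 1) := hAZ.trans hZdom
    have hAK : A' ⊆ K := hAZ.trans hZK
    calc A'.encard ≤ S.span dist n (ε / 2) (K ∩ A') := by
          simp only [DRSystem.span]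
          refine le_iInf₂ fun B hB => ?_
          exact S.sep_encard_le_span_encard hn (Z' := K ∩ A')
            (fun x hx => hAD hx.2) (fun x hx => ⟨hAK hx, hx⟩) hAp hB
      _ ≤ S.sspan dist n (ε / 2) K := by
          simp only [DRSystem.sspan]
          exact le_iSup₂_of_le A' ⟨hAf.isClosed, hAD⟩ le_rfl
  constructor
  · -- (1)
    apply le_antisymm
    · simp only [DRSystem.ssep]
      refine iSup₂_le fun F hF => ?_
      simp only [DRSystem.sep]
      refine iSup₂_le fun A hA => le_iSup₂_of_le A
        ⟨hA.1.trans (Set.inter_subset_inter_right K hF.2), hA.2⟩ le_rfl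
    · simp only [DRSystem.sep]
      exact iSup₂_le fun A hA => main _ hsep_fin A hA
  · -- (2): get a maximal (n,ε,Z)-separated set via Zorn
    have hch : ∀ c ⊆ {A : Set X | S.IsSep dist n ε Z A}, IsChain (· ⊆ ·) c →
        ∃ ub ∈ {A : Set X | S.IsSep dist n ε Z A}, ∀ s ∈ c, s ⊆ ub := by
      intro c hc hchain
      refine ⟨⋃₀ c, ⟨Set.sUnion_subset fun A hA => (hc hA).1, ?_⟩,
        fun s hs => Set.subset_sUnion_of_mem hs⟩
      intro x hx y hy hxy
      obtain ⟨A, hA, hxA⟩ := hx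
      obtain ⟨B, hB, hyB⟩ := hy
      rcases hchain.total hA hB with hAB | hBA
      · exact (hc hB).2 (hAB hxA) hyB hxy
      · exact (hc hA).2 hxA (hBA hyB) hxy
    obtain ⟨M, hM⟩ := zorn_subset {A : Set X | S.IsSep dist n ε Z A} hch
    have hMspan : S.IsSpan dist n ε Z M := by
        refine ⟨hM.1.1, fun x hx => ?_⟩
        by_contra h
        push_neg at h
        have hxM : x ∉ M := fun hxM =>
          absurd (S.dN_self_le hε.le x) (not_le.2 (h x hxM))
        have hins : insert x M ∈ {A : Set X | S.IsSep dist n ε Z A} := by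
          refine ⟨Set.insert_subset hx hM.1.1, ?_⟩
          haveI : Std.Symm (fun x y => ε < S.dN dist n x y) :=
            ⟨fun a b hab => by rw [S.dN_symm]; exact hab⟩
          exact (Set.pairwise_insert_of_symm).2 ⟨hM.1.2, fun b hb _ => h b hb⟩
        exact hxM (hM.2 hins (Set.subset_insert x M) (Set.mem_insert x M))
    calc S.span dist n ε Z ≤ M.encard := by
          simp only [DRSystem.span]
          exact iInf₂_le M hMspan
      _ ≤ S.sspan dist n (ε / 2) K := main _ hspan_fin M hM.1
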